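/- Let M^E be an Eisenstein lattice of rank n over E = Z[\omega] whose underlying Z-lattice M (of rank 2n) is unimodular, with the standard scaled hermitian form. Then |det M^E| = 3^{n/2} (as a real number), i.e. (det M^E)^2 = 3^n. -/

import Mathlib

/-- The primitive cube root of unity `ω = e^{2πi/3} = (-1 + i√3)/2`. -/
noncomputable def omega3 : ℂ := (-1 + Real.sqrt 3 * Complex.I) / 2

/-- The Eisenstein integers `ℤ[ω]`, as a subring of `ℂ`. -/
noncomputable def Eis : Subring ℂ := Subring.closure {omega3}


lemma omega3_mem : omega3 ∈ Eis := Subring.subset_closure rfl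

lemma sqrt3_sq : (Real.sqrt 3 : ℂ) * (Real.sqrt 3 : ℂ) = 3 := by
  rw [← Complex.ofReal_mul, Real.mul_self_sqrt (by norm_num)]; norm_num

lemma omega3_sq : omega3 * omega3 = -1 - omega3 := by
  unfold omega3
  have h1 := sqrt3_sq
  have h2 := Complex.I_sq
  field_simp
  linear_combination Complex.I^2*h1 + 3*h2

lemma omega3_im : omega3.im = Real.sqrt 3 / 2 := by
  simp [omega3]

lemma omega3_re : omega3.re = -1 / 2 := by
  simp [omega3]

lemma conj_omega3 : (starRingEnd ℂ) omega3 = -1 - omega3 := by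
  unfold omega3
  rw [map_div₀, map_add, map_neg, map_one, map_mul, Complex.conj_I, Complex.conj_ofReal,
    map_ofNat]
  ring

noncomputable def eisAux : Subring ℂ where
  carrier := {z | ∃ a b : ℤ, z = (a : ℂ) + (b : ℂ) * omega3}
  one_mem' := ⟨1, 0, by norm_num⟩
  zero_mem' := ⟨0, 0, by norm_num⟩
  add_mem' := by
    rintro x y ⟨a, b, rfl⟩ ⟨c, d, rfl⟩
    exact ⟨a + c, b + d, by push_cast; ring⟩
  neg_mem' := by
    rintro x ⟨a, b, rfl⟩
    exact ⟨-a, -b, by push_cast; ring⟩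
  mul_mem' := by
    rintro x y ⟨a, b, rfl⟩ ⟨c, d, rfl⟩
    exact ⟨a * c - b * d, a * d + b * c - b * d, by
      push_cast
      linear_combination (b : ℂ) * (d : ℂ) * omega3_sq⟩

lemma mem_eis_descr {z : ℂ} (hz : z ∈ Eis) : ∃ a b : ℤ, z = (a : ℂ) + (b : ℂ) * omega3 := by
  have : Eis ≤ eisAux := Subring.closure_le.mpr (by
    intro x hx
    rw [Set.mem_singleton_iff] at hx
    exact ⟨0, 1, by simp [hx]⟩)
  exact this hz

noncomputable def vE : Fin 2 → Eis := ![1, ⟨omega3, omega3_mem⟩]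

lemma vE_indep : LinearIndependent ℤ vE := by
  rw [Fintype.linearIndependent_iff]
  intro g hg
  have hC : (g 0 : ℂ) + (g 1 : ℂ) * omega3 = 0 := by
    have h2 := congrArg (Subtype.val) hg
    push_cast [Fin.sum_univ_two, vE] at h2
    convert h2 using 2 <;> simp [zsmul_eq_mul]
  have him := congrArg Complex.im hC
  simp [Complex.add_im, Complex.mul_im, omega3_im, omega3_re] at him
  have hg1 : g 1 = 0 := him
  have hre := congrArg Complex.re hC
  rw [hg1] at hre
  simp at hre
  intro i
  fin_cases i
  · exact_mod_cast hre
  · exact hg1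

lemma vE_span : ⊤ ≤ Submodule.span ℤ (Set.range vE) := by
  rintro ⟨z, hz⟩ -
  obtain ⟨a, b, hab⟩ := mem_eis_descr hz
  have hz2 : (⟨z, hz⟩ : Eis) = a • vE 0 + b • vE 1 := by
    apply Subtype.ext
    push_cast [vE]
    simpa [zsmul_eq_mul] using hab
  rw [hz2]
  exact add_mem (Submodule.smul_mem _ _ (Submodule.subset_span ⟨0, rfl⟩))
    (Submodule.smul_mem _ _ (Submodule.subset_span ⟨1, rfl⟩))

noncomputable def bEis : Module.Basis (Fin 2) ℤ Eis := Module.Basis.mk vE_indep vE_span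

lemma bEis_zero : (bEis 0 : ℂ) = 1 := by rw [bEis, Module.Basis.mk_apply]; simp [vE]

lemma bEis_one : (bEis 1 : ℂ) = omega3 := by rw [bEis, Module.Basis.mk_apply]; simp [vE]

/-- Let `M^E` be an Eisenstein lattice of rank `n` over `E = ℤ[ω]` (hermitian
form `h`), whose underlying ℤ-lattice of rank `2n`, with bilinear form
`⟨x,y⟩ = (2/3)·Re h(x,y)`, is unimodular.  Then `|det M^E| = 3^{n/2}`, i.e. the
square of the determinant of the Gram matrix of `h` in an `E`-basis equals
`3^n`. -/
theorem stmt10 (n : ℕ) {L : Type*} [AddCommGroup L] [Module Eis L]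
    (h : L → L → ℂ)
    (haddl : ∀ x₁ x₂ y, h (x₁ + x₂) y = h x₁ y + h x₂ y)
    (hsmul : ∀ (c : Eis) (x y : L), h (c • x) y = (c : ℂ) * h x y)
    (hconj : ∀ x y, h x y = starRingEnd ℂ (h y x))
    (bE : Module.Basis (Fin n) Eis L)
    (bZ : Module.Basis (Fin (2 * n)) ℤ L)
    (huni : (Matrix.of fun i j => (2 / 3 : ℝ) * (h (bZ i) (bZ j)).re).det = 1 ∨
            (Matrix.of fun i j => (2 / 3 : ℝ) * (h (bZ i) (bZ j)).re).det = -1) :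
    (Matrix.of fun i j => h (bE i) (bE j)).det ^ 2 = (3 : ℂ) ^ n := by
  classical
  -- bilinearity facts
  have haddr : ∀ x y₁ y₂, h x (y₁ + y₂) = h x y₁ + h x y₂ := by
    intro x y₁ y₂
    rw [hconj x (y₁ + y₂), haddl, map_add, ← hconj, ← hconj]
  set F : L → L →+ ℂ := fun y => AddMonoidHom.mk' (fun x => h x y) (fun a b => haddl a b y)
    with hF
  set Fr : L → L →+ ℂ := fun x => AddMonoidHom.mk' (fun y => h x y) (fun a b => haddr x a b)
    with hFr
  have hFy : ∀ x y, F y x = h x y := fun _ _ => rfl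
  have hFrx : ∀ x y, Fr x y = h x y := fun _ _ => rfl
  have hzl : ∀ (m : ℤ) (x y : L), h (m • x) y = (m : ℂ) * h x y := by
    intro m x y
    have := map_zsmul (F y) m x
    simpa [hFy, zsmul_eq_mul] using this
  have hzr : ∀ (m : ℤ) (x y : L), h x (m • y) = (m : ℂ) * h x y := by
    intro m x y
    have := map_zsmul (Fr x) m y
    simpa [hFrx, zsmul_eq_mul] using this
  have hsmulr : ∀ (c : Eis) (x y : L), h x (c • y) = starRingEnd ℂ (c : ℂ) * h x y := by
    intro c x y
    rw [hconj x (c • y), hsmul, _root_.map_mul, ← hconj]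
  set G : Matrix (Fin n) (Fin n) ℂ := Matrix.of fun i j => h (bE i) (bE j) with hG
  -- ℤ-basis coming from the E-basis
  set b' : Module.Basis (Fin 2 × Fin n) ℤ L := bEis.smulTower bE with hb'def
  set b2 : Module.Basis (Fin (2 * n)) ℤ L := b'.reindex finProdFinEquiv with hb2def
  set T : Matrix (Fin 2 × Fin n) (Fin 2 × Fin n) ℝ :=
    Matrix.of (fun p q => (2 / 3 : ℝ) * (h (b' p) (b' q)).re) with hT
  -- Step 1/2 : change of basis, det T = ±1
  have hsum_l : ∀ {α : Type} (s : Finset α) (f : α → L) (y : L),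
      h (∑ a ∈ s, f a) y = ∑ a ∈ s, h (f a) y := by
    intro α s f y
    exact map_sum (F y) f s
  have hsum_r : ∀ {α : Type} (s : Finset α) (f : α → L) (x : L),
      h x (∑ a ∈ s, f a) = ∑ a ∈ s, h x (f a) := by
    intro α s f x
    exact map_sum (Fr x) f s
  have hdetT : T.det = 1 ∨ T.det = -1 := by
    set P : Matrix (Fin (2 * n)) (Fin (2 * n)) ℤ := b2.toMatrix bZ with hP
    have hbZ : ∀ j, bZ j = ∑ k, P k j • b2 k := by
      intro j
      rw [hP]
      simp_rw [Module.Basis.toMatrix_apply]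
      exact (b2.sum_repr (bZ j)).symm
    have hentry : ∀ i j, h (bZ i) (bZ j)
        = ∑ k, ∑ l, (P k i : ℂ) * (P l j : ℂ) * h (b2 k) (b2 l) := by
      intro i j
      rw [hbZ i, hbZ j, hsum_l]
      refine Finset.sum_congr rfl fun k _ => ?_
      rw [hzl, hsum_r, Finset.mul_sum]
      refine Finset.sum_congr rfl fun l _ => ?_
      rw [hzr]
      ring
    have hmat : (Matrix.of fun i j => (2 / 3 : ℝ) * (h (bZ i) (bZ j)).re) =
        (P.map (Int.cast : ℤ → ℝ)).transpose *
          (Matrix.of fun k l => (2 / 3 : ℝ) * (h (b2 k) (b2 l)).re) *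
          (P.map (Int.cast : ℤ → ℝ)) := by
      ext i j
      rw [Matrix.of_apply, hentry]
      have hre : (∑ k, ∑ l, (P k i : ℂ) * (P l j : ℂ) * h (b2 k) (b2 l)).re
          = ∑ k, ∑ l, (P k i : ℝ) * (P l j : ℝ) * (h (b2 k) (b2 l)).re := by
        rw [Complex.re_sum]
        refine Finset.sum_congr rfl fun k _ => ?_
        rw [Complex.re_sum]
        refine Finset.sum_congr rfl fun l _ => ?_
        have hc : (P k i : ℂ) * (P l j : ℂ) * h (b2 k) (b2 l)
            = ((((P k i : ℝ) * (P l j : ℝ)) : ℝ) : ℂ) * h (b2 k) (b2 l) := by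
          push_cast; ring
        rw [hc, Complex.re_ofReal_mul]
      rw [hre]
      simp only [Matrix.mul_apply, Matrix.transpose_apply, Matrix.map_apply, Matrix.of_apply]
      rw [Finset.mul_sum]
      simp_rw [Finset.mul_sum]
      rw [Finset.sum_comm]
      refine Finset.sum_congr rfl fun l _ => ?_
      rw [Finset.sum_mul]
      refine Finset.sum_congr rfl fun k _ => ?_
      ring
    have hPdet : P.det = 1 ∨ P.det = -1 := by
      refine Int.isUnit_iff.mp ?_
      have hone := Module.Basis.toMatrix_mul_toMatrix_flip b2 bZ
      exact IsUnit.of_mul_eq_one _ (by rw [← Matrix.det_mul, hone, Matrix.det_one])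
    have hmapdet : (P.map (Int.cast : ℤ → ℝ)).det = (P.det : ℝ) := by
      have hmd := RingHom.map_det (Int.castRingHom ℝ) P
      rw [RingHom.mapMatrix_apply] at hmd
      rw [show (Int.cast : ℤ → ℝ) = ⇑(Int.castRingHom ℝ) from rfl, ← hmd]
    have hTdet2 : (Matrix.of fun i j => (2 / 3 : ℝ) * (h (bZ i) (bZ j)).re).det
        = (P.det : ℝ) ^ 2 *
          (Matrix.of fun k l => (2 / 3 : ℝ) * (h (b2 k) (b2 l)).re).det := by
      rw [hmat, Matrix.det_mul, Matrix.det_mul, Matrix.det_transpose, hmapdet]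
      ring
    have hM2T : (Matrix.of fun k l => (2 / 3 : ℝ) * (h (b2 k) (b2 l)).re).det = T.det := by
      have heq : (Matrix.of fun k l => (2 / 3 : ℝ) * (h (b2 k) (b2 l)).re)
          = T.submatrix finProdFinEquiv.symm finProdFinEquiv.symm := by
        ext k l
        simp [hT, hb2def]
      rw [heq, Matrix.det_submatrix_equiv_self]
    have hsq : (P.det : ℝ) ^ 2 = 1 := by
      rcases hPdet with hp | hp <;> rw [hp] <;> norm_num
    rcases huni with hU1 | hU1 <;> [left; right] <;>
      · rw [hTdet2, hM2T, hsq, one_mul] at hU1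
        exact hU1
  -- Step 3 : complex factorization
  set w : Fin 2 → ℂ := ![1, omega3] with hw
  have hb'val : ∀ (a : Fin 2) (i : Fin n) (c : Fin 2) (j : Fin n),
      h (b' (a, i)) (b' (c, j)) = w a * starRingEnd ℂ (w c) * G i j := by
    intro a i c j
    rw [hb'def, Module.Basis.smulTower_apply, Module.Basis.smulTower_apply]
    dsimp only
    rw [hsmul, hsmulr]
    fin_cases a <;> fin_cases c <;>
      simp [hw, bEis_zero, bEis_one, hG] <;> ring
  set u : Matrix (Fin 2) (Fin 2) ℂ := !![1, 1; omega3, -1 - omega3] with hu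
  set v : Matrix (Fin 2) (Fin 2) ℂ := !![1, -1 - omega3; 1, omega3] with hv
  set Gc : Matrix (Fin n) (Fin n) ℂ := G.map (starRingEnd ℂ) with hGc
  set σ : Fin 2 × Fin n ≃ Fin n ⊕ Fin n :=
    (finTwoEquiv.prodCongr (Equiv.refl (Fin n))).trans (Equiv.boolProdEquivSum (Fin n)) with hσ
  set D : Matrix (Fin 2 × Fin n) (Fin 2 × Fin n) ℂ :=
    (Matrix.fromBlocks G 0 0 Gc).submatrix σ σ with hD
  set U : Matrix (Fin 2 × Fin n) (Fin 2 × Fin n) ℂ :=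
    Matrix.kroneckerMap (· * ·) u (1 : Matrix (Fin n) (Fin n) ℂ) with hU
  set V : Matrix (Fin 2 × Fin n) (Fin 2 × Fin n) ℂ :=
    Matrix.kroneckerMap (· * ·) v (1 : Matrix (Fin n) (Fin n) ℂ) with hV
  have hfac : T.map Complex.ofReal = (3 : ℂ)⁻¹ • (U * D * V) := by
    ext p q
    obtain ⟨a, i⟩ := p
    obtain ⟨c, j⟩ := q
    have hDV : ∀ (b : Fin 2) (k : Fin n),
        (D * V) (b, k) (c, j) = D (b, k) (0, j) * v 0 c + D (b, k) (1, j) * v 1 c := by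
      intro b k
      rw [Matrix.mul_apply, Fintype.sum_prod_type, Fin.sum_univ_two]
      simp [hV, Matrix.one_apply, mul_ite, ite_mul, Finset.sum_ite_eq', mul_comm]
    have hmul : (U * D * V) (a, i) (c, j)
        = w a * (starRingEnd ℂ) (w c) * G i j
          + (starRingEnd ℂ) (w a) * w c * Gc i j := by
      rw [Matrix.mul_assoc, Matrix.mul_apply, Fintype.sum_prod_type, Fin.sum_univ_two]
      simp only [hDV]
      simp only [hU, Matrix.kroneckerMap_apply, Matrix.one_apply, mul_ite, ite_mul, mul_one,
        one_mul, mul_zero, zero_mul, Finset.sum_ite_eq', Finset.mem_univ, if_true]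
      fin_cases a <;> fin_cases c <;>
        simp [hD, hσ, finTwoEquiv, hu, hv, hw, hGc, conj_omega3, Matrix.fromBlocks] <;> ring
    simp only [Matrix.map_apply, Matrix.smul_apply, smul_eq_mul, hmul, hT, Matrix.of_apply]
    rw [hb'val]
    have hz := Complex.add_conj (w a * starRingEnd ℂ (w c) * G i j)
    simp only [_root_.map_mul, Complex.conj_conj] at hz
    have hGcij : Gc i j = (starRingEnd ℂ) (G i j) := rfl
    rw [hGcij]
    push_cast at hz ⊢
    linear_combination (-(1 / 3) : ℂ) * hz
  -- determinants
  have hdetU : U.det = (-1 - 2 * omega3) ^ n := by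
    rw [hU, Matrix.det_kronecker, Matrix.det_one, one_pow, mul_one, Fintype.card_fin, hu]
    rw [Matrix.det_fin_two_of]
    congr 1
    ring
  have hdetV : V.det = (1 + 2 * omega3) ^ n := by
    rw [hV, Matrix.det_kronecker, Matrix.det_one, one_pow, mul_one, Fintype.card_fin, hv]
    rw [Matrix.det_fin_two_of]
    congr 1
    ring
  have hGcdet : Gc.det = starRingEnd ℂ G.det := by
    have hmd := RingHom.map_det (starRingEnd ℂ) G
    rw [RingHom.mapMatrix_apply] at hmd
    rw [hGc, ← hmd]
  have hGreal : starRingEnd ℂ G.det = G.det := by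
    have : G.map (starRingEnd ℂ) = G.transpose := by
      ext i j
      simp [hG, Matrix.map_apply]
      exact (hconj _ _).symm
    rw [RingHom.map_det, RingHom.mapMatrix_apply, this, Matrix.det_transpose]
  have hdetD : D.det = G.det * G.det := by
    rw [hD, Matrix.det_submatrix_equiv_self, Matrix.det_fromBlocks_zero₂₁, hGcdet, hGreal]
  have hcard : Fintype.card (Fin 2 × Fin n) = 2 * n := by simp
  have hdetfac : ((T.det : ℂ)) = (3 : ℂ)⁻¹ ^ (2 * n) * ((-1 - 2 * omega3) * (1 + 2 * omega3)) ^ n * (G.det * G.det) := by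
    have h1 : ((T.det : ℝ) : ℂ) = (T.map Complex.ofReal).det := by
      have hmd := RingHom.map_det Complex.ofRealHom T
      rwa [RingHom.mapMatrix_apply, Complex.ofRealHom_eq_coe] at hmd
    rw [h1, hfac, Matrix.det_smul, hcard, Matrix.det_mul, Matrix.det_mul, hdetU, hdetV, hdetD,
      mul_pow]
    ring
  have huv : (-1 - 2 * omega3) * (1 + 2 * omega3) = 3 := by
    linear_combination (-4 : ℂ) * omega3_sq
  -- conclude
  rw [huv] at hdetfac
  have h3ne : ((3 : ℂ) ^ n) ≠ 0 := pow_ne_zero _ (by norm_num)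
  have h9 : ((3 : ℂ)⁻¹) ^ (2 * n) = ((3 : ℂ) ^ n * (3 : ℂ) ^ n)⁻¹ := by
    rw [inv_pow, two_mul, pow_add]
  rw [h9] at hdetfac
  have hsimp : ((3 : ℂ) ^ n * 3 ^ n)⁻¹ * (3 : ℂ) ^ n = ((3 : ℂ) ^ n)⁻¹ := by
    rw [mul_inv]
    field_simp
  rw [hsimp] at hdetfac
  have hdd : ∀ ε : ℂ, (T.det : ℂ) = ε → G.det * G.det = ε * 3 ^ n := by
    intro ε hε
    rw [hε] at hdetfac
    have h2 := congrArg (fun z => (3 : ℂ) ^ n * z) hdetfac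
    rw [← mul_assoc, mul_inv_cancel₀ h3ne, one_mul] at h2
    rw [← h2]
    ring
  have hreal : (G.det.re : ℂ) = G.det := Complex.conj_eq_iff_re.mp hGreal
  rcases hdetT with he | he
  · have := hdd 1 (by exact_mod_cast he)
    rw [sq]
    simpa using this
  · exfalso
    have hneg := hdd (-1) (by push_cast [he]; ring)
    rw [← hreal] at hneg
    have : ((G.det.re * G.det.re : ℝ) : ℂ) = ((-(3 ^ n) : ℝ) : ℂ) := by
      push_cast
      linear_combination hneg
    have hr : G.det.re * G.det.re = -(3 ^ n : ℝ) := Complex.ofReal_inj.mp this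
    linarith [pow_pos (by norm_num : (0 : ℝ) < 3) n, mul_self_nonneg G.det.re]
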